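/- arXiv:math/0612104 — 2 statements merged into one kernel-verified Lean document; each statement's English description precedes it below -/
import Mathlib

section
/- If f is a finite-dimensional irreducible representation of a group G on a complex vector space V, then the linear span of the set of operators {f(g) : g ∈ G} is the whole space End(V) of linear operators on V. -/
/-- For a finite-dimensional irreducible complex representation, the operators
`f(g)` span the whole endomorphism space `End(V)`. -/
theorem stmt_9 {G V : Type*} [Group G]
    [AddCommGroup V] [Module ℂ V] [FiniteDimensional ℂ V] [Nontrivial V]
    (f : G →* (V ≃ₗ[ℂ] V))
    (hf : ∀ p : Submodule ℂ V, (∀ (g : G), ∀ x ∈ p, f g x ∈ p) → p = ⊥ ∨ p = ⊤) :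
    Submodule.span ℂ {A : V →ₗ[ℂ] V | ∃ g : G, A = (f g).toLinearMap} = ⊤ := by
  classical
  -- the representation as a `Representation`
  let ρ : Representation ℂ G V :=
    { toFun := fun g => (f g).toLinearMap
      map_one' := by ext v; simp
      map_mul' := fun g h => by ext v; simp }
  set R := MonoidAlgebra ℂ G with hR
  let π : R →ₐ[ℂ] Module.End ℂ V := ρ.asAlgebraHom
  letI : Module R V := Module.compHom V π.toRingHom
  have smul_def : ∀ (a : R) (v : V), a • v = π a v := fun _ _ => rfl
  letI : IsScalarTower ℂ R V :=
    ⟨fun c a v => by rw [smul_def, smul_def, map_smul]; rfl⟩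
  letI : SMulCommClass ℂ R V := ⟨fun c a v => ((π a).map_smul c v).symm⟩
  letI : SMulCommClass R ℂ V := ⟨fun a c v => (π a).map_smul c v⟩
  -- `V` is a simple `R`-module
  haveI : Nontrivial (Submodule R V) := by
    obtain ⟨x, hx⟩ := exists_ne (0 : V)
    exact ⟨⊥, ⊤, fun h => hx (by
      have : x ∈ (⊤ : Submodule R V) := trivial
      rw [← h] at this
      simpa using this)⟩
  haveI : IsSimpleModule R V := by
    refine { eq_bot_or_eq_top := fun p => ?_ }
    · 
      have key := hf (p.restrictScalars ℂ) ?_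
      · rcases key with h | h
        · left; ext x
          simpa using congrArg (fun q : Submodule ℂ V => x ∈ q) h
        · right; ext x
          simpa using congrArg (fun q : Submodule ℂ V => x ∈ q) h
      · intro g x hx
        have h1 : (MonoidAlgebra.of ℂ G g) • x ∈ p := p.smul_mem _ hx
        have h2 : (MonoidAlgebra.of ℂ G g) • x = f g x := by
          rw [smul_def, Representation.asAlgebraHom_of]; rfl
        rwa [h2] at h1
  -- Schur: every `R`-linear endomorphism of `V` is a scalar
  have schur : ∀ φ : V →ₗ[R] V, ∃ c : ℂ, ∀ v, φ v = c • v := by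
    intro φ
    let φc : V →ₗ[ℂ] V :=
      { toFun := φ
        map_add' := φ.map_add
        map_smul' := fun c v => by
          show φ (c • v) = c • φ v
          rw [← algebraMap_smul R c v, map_smul, algebraMap_smul] }
    obtain ⟨c, hc⟩ := Module.End.exists_eigenvalue φc
    obtain ⟨v, hv⟩ := hc.exists_hasEigenvector
    refine ⟨c, ?_⟩
    let ψ : V →ₗ[R] V := φ - c • LinearMap.id
    have hker : LinearMap.ker ψ ≠ ⊥ := by
      intro h
      have : v ∈ LinearMap.ker ψ := by
        simp only [ψ, LinearMap.mem_ker, LinearMap.sub_apply, LinearMap.smul_apply,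
          LinearMap.id_apply, sub_eq_zero]
        exact hv.apply_eq_smul
      rw [h] at this
      exact hv.right (by simpa using this)
    have : LinearMap.ker ψ = ⊤ := (eq_bot_or_eq_top _).resolve_left hker
    intro w
    have hw : w ∈ LinearMap.ker ψ := this ▸ trivial
    simpa [ψ, sub_eq_zero] using hw
  -- the density argument
  set n := Module.finrank ℂ V with hn
  let b : Module.Basis (Fin n) ℂ V := Module.finBasis ℂ V
  haveI : IsSemisimpleModule R (Fin n → V) := by
    refine isSemisimpleModule_of_isSemisimpleModule_submodule'
      (p := fun i => LinearMap.range (LinearMap.single R (fun _ : Fin n => V) i)) ?_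
      (LinearMap.iSup_range_single R _)
    intro i
    have hinj : Function.Injective (LinearMap.single R (fun _ : Fin n => V) i) := by
      intro v w h
      simpa using congrFun h i
    exact IsSemisimpleModule.congr
      (LinearEquiv.ofInjective (LinearMap.single R (fun _ : Fin n => V) i) hinj).symm
  let w₀ : Fin n → V := fun i => b i
  let N : Submodule R (Fin n → V) := Submodule.span R {w₀}
  obtain ⟨N', hN'⟩ := exists_isCompl N
  let e : (Fin n → V) →ₗ[R] (Fin n → V) :=
    N.subtype.comp (Submodule.projectionOnto N N' hN')
  have he_mem : ∀ w, e w ∈ N := fun w => (Submodule.projectionOnto N N' hN' w).2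
  have he_id : ∀ w ∈ N, e w = w := by
    intro w hw
    show (↑(Submodule.projectionOnto N N' hN' w) : Fin n → V) = w
    rw [Submodule.projectionOnto_apply_left hN' ⟨w, hw⟩]
  -- the projection acts by a complex matrix
  have hmat : ∃ c : Fin n → Fin n → ℂ, ∀ w i, e w i = ∑ j, c i j • w j := by
    have : ∀ i j : Fin n, ∃ cij : ℂ, ∀ v : V,
        e (Pi.single j v) i = cij • v := by
      intro i j
      obtain ⟨cij, hcij⟩ := schur
        ((LinearMap.proj i).comp (e.comp (LinearMap.single R (fun _ : Fin n => V) j)))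
      exact ⟨cij, fun v => hcij v⟩
    choose c hc using this
    refine ⟨fun i j => c i j, fun w i => ?_⟩
    have hw : w = ∑ j, Pi.single j (w j) := (Finset.univ_sum_single w).symm
    calc e w i = e (∑ j, Pi.single j (w j)) i := by rw [← hw]
      _ = (∑ j, e (Pi.single j (w j))) i := by rw [map_sum]
      _ = ∑ j, e (Pi.single j (w j)) i := by rw [Finset.sum_apply]
      _ = ∑ j, c i j • w j := by
          refine Finset.sum_congr rfl fun j _ => ?_
          exact hc i j (w j)
  obtain ⟨c, hc⟩ := hmat
  have hw₀N : w₀ ∈ N := Submodule.mem_span_singleton_self w₀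
  have hfix : ∀ i, ∑ j, c i j • b j = b i := by
    intro i
    have := congrFun (he_id w₀ hw₀N) i
    rw [hc w₀ i] at this
    exact this
  -- surjectivity of π
  have hsurj : ∀ T : Module.End ℂ V, ∃ a : R, π a = T := by
    intro T
    let u : Fin n → V := fun i => T (b i)
    have hu : u ∈ N := by
      have : e u = u := by
        funext i
        rw [hc u i]
        calc ∑ j, c i j • u j = T (∑ j, c i j • b j) := by
              rw [map_sum]; exact Finset.sum_congr rfl fun j _ => (map_smul T _ _).symm
          _ = u i := by rw [hfix i]
      rw [← this]; exact he_mem u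
    obtain ⟨a, ha⟩ := Submodule.mem_span_singleton.mp hu
    refine ⟨a, b.ext fun i => ?_⟩
    have := congrFun ha i
    simp only [Pi.smul_apply, smul_def] at this
    exact this
  -- conclude
  rw [eq_top_iff]
  rintro T -
  obtain ⟨a, ha⟩ := hsurj T
  rw [← ha]
  have : π a = a.coeff.sum fun g cg => cg • ρ g := by
    conv_lhs => rw [← MonoidAlgebra.ofCoeff_coeff a, ← Finsupp.sum_single a.coeff]
    rw [MonoidAlgebra.ofCoeff_finsuppSum, map_finsuppSum]
    exact Finsupp.sum_congr fun g _ => ρ.asAlgebraHom_single g _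
  rw [this]
  refine Submodule.sum_mem _ fun g _ => Submodule.smul_mem _ _ ?_
  exact Submodule.subset_span ⟨g, rfl⟩
end

section
/- The тensor product representation f₁ ⊗ f₂ of the direct product group G₁ × G₂, acting on V₁ ⊗ V₂ by (f₁⊗f₂)(g₁,g₂)(x⊗y) = f₁(g₁)x ⊗ f₂(g₂)y, is irreducible if and only if both f₁ and f₂ are irreducible. -/
open scoped TensorProduct

section General

variable {M N : Type*} [AddCommGroup M] [Module ℂ M] [AddCommGroup N] [Module ℂ N]

lemma aux_tmul_ne_zero {x : M} {y : N} (hx : x ≠ 0) (hy : y ≠ 0) :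
    x ⊗ₜ[ℂ] y ≠ 0 := by
  obtain ⟨φ, hφ⟩ : ∃ φ : Module.Dual ℂ M, φ x ≠ 0 := by
    by_contra h
    push_neg at h
    exact hx ((Module.forall_dual_apply_eq_zero_iff ℂ x).mp h)
  intro h0
  have h1 := congrArg (fun z => (TensorProduct.lid ℂ N)
    ((TensorProduct.map φ (LinearMap.id : N →ₗ[ℂ] N)) z)) h0
  simp only [TensorProduct.map_tmul, TensorProduct.lid_tmul, LinearMap.id_coe, id_eq,
    map_zero] at h1
  rcases smul_eq_zero.mp h1 with h | h
  · exact hφ h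
  · exact hy h

/-- The projection `V₁ ⊗ V₂ → V₁` induced by a dual vector on `V₂`. -/
noncomputable def pmap (φ : Module.Dual ℂ N) : (M ⊗[ℂ] N) →ₗ[ℂ] M :=
  (TensorProduct.rid ℂ M).toLinearMap ∘ₗ TensorProduct.map LinearMap.id φ

@[simp] lemma pmap_tmul (φ : Module.Dual ℂ N) (x : M) (y : N) :
    pmap φ (x ⊗ₜ[ℂ] y) = φ y • x := by
  simp [pmap]

lemma expand_basis {ι : Type*} [Fintype ι] (b : Module.Basis ι ℂ N) (z : M ⊗[ℂ] N) :
    z = ∑ j, (pmap (b.coord j) z) ⊗ₜ[ℂ] b j := by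
  induction z using TensorProduct.induction_on with
  | zero => simp
  | tmul x y =>
    simp only [pmap_tmul]
    calc x ⊗ₜ[ℂ] y = x ⊗ₜ[ℂ] (∑ j, b.repr y j • b j) := by rw [Module.Basis.sum_repr]
    _ = ∑ j, x ⊗ₜ[ℂ] (b.repr y j • b j) := by rw [TensorProduct.tmul_sum]
    _ = ∑ j, ((b.coord j) y • x) ⊗ₜ[ℂ] b j := by
        refine Finset.sum_congr rfl fun j _ => ?_
        rw [Module.Basis.coord_apply, TensorProduct.tmul_smul, TensorProduct.smul_tmul']
  | add u v hu hv =>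
    calc u + v
        = (∑ j, pmap (b.coord j) u ⊗ₜ[ℂ] b j) + (∑ j, pmap (b.coord j) v ⊗ₜ[ℂ] b j) := by
          rw [← hu, ← hv]
    _ = ∑ j, (pmap (b.coord j) u + pmap (b.coord j) v) ⊗ₜ[ℂ] b j := by
          rw [← Finset.sum_add_distrib]
          exact Finset.sum_congr rfl fun j _ => (TensorProduct.add_tmul _ _ _).symm
    _ = ∑ j, pmap (b.coord j) (u + v) ⊗ₜ[ℂ] b j := by simp [map_add]

/-- The subspace of `y ∈ N` with `x ⊗ y ∈ W` for all `x`. -/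
def uW (W : Submodule ℂ (M ⊗[ℂ] N)) : Submodule ℂ N where
  carrier := {y | ∀ x : M, x ⊗ₜ[ℂ] y ∈ W}
  zero_mem' := fun x => by rw [TensorProduct.tmul_zero]; exact W.zero_mem
  add_mem' := fun ha hb x => by
    rw [TensorProduct.tmul_add]; exact W.add_mem (ha x) (hb x)
  smul_mem' := fun c y hy x => by
    rw [TensorProduct.tmul_smul]; exact W.smul_mem c (hy x)

lemma mem_uW {W : Submodule ℂ (M ⊗[ℂ] N)} {y : N} :
    y ∈ uW W ↔ ∀ x : M, x ⊗ₜ[ℂ] y ∈ W := Iff.rfl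

lemma range_map_le_W (W : Submodule ℂ (M ⊗[ℂ] N)) :
    LinearMap.range (TensorProduct.map (LinearMap.id : M →ₗ[ℂ] M) (uW W).subtype) ≤ W := by
  rintro z ⟨t, rfl⟩
  induction t using TensorProduct.induction_on with
  | zero => simpa using W.zero_mem
  | tmul x u => simpa using u.2 x
  | add u v hu hv => rw [map_add]; exact W.add_mem hu hv

end General

section Hard

variable {G : Type*} [Group G] {V₁ : Type*} [AddCommGroup V₁] [Module ℂ V₁]
  {V₂ : Type*} [AddCommGroup V₂] [Module ℂ V₂]

/-- A representation by linear automorphisms, as a `Representation`. -/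
noncomputable def toRep (f : G →* (V₁ ≃ₗ[ℂ] V₁)) : Representation ℂ G V₁ where
  toFun g := (f g).toLinearMap
  map_one' := by ext v; simp
  map_mul' g h := by ext v; simp

@[simp] lemma toRep_apply (f : G →* (V₁ ≃ₗ[ℂ] V₁)) (g : G) :
    toRep f g = (f g).toLinearMap := rfl

/-- The representation on `V₁ ⊗ V₂` acting on the first factor only. -/
noncomputable def repT (f : G →* (V₁ ≃ₗ[ℂ] V₁)) : Representation ℂ G (V₁ ⊗[ℂ] V₂) where
  toFun g := TensorProduct.map (f g).toLinearMap LinearMap.id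
  map_one' := TensorProduct.ext' (by simp)
  map_mul' g h := TensorProduct.ext' (by simp)

@[simp] lemma repT_apply (f : G →* (V₁ ≃ₗ[ℂ] V₁)) (g : G) :
    repT (V₂ := V₂) f g = TensorProduct.map (f g).toLinearMap LinearMap.id := rfl

variable (f : G →* (V₁ ≃ₗ[ℂ] V₁))

lemma sigma_tmul (a : MonoidAlgebra ℂ G) (x : V₁) (y : V₂) :
    (repT (V₂ := V₂) f).asAlgebraHom a (x ⊗ₜ[ℂ] y)
      = ((toRep f).asAlgebraHom a x) ⊗ₜ[ℂ] y := by
  induction a using MonoidAlgebra.induction_linear with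
  | zero => simp
  | add p q hp hq => simp [map_add, hp, hq, TensorProduct.add_tmul]
  | single g c =>
    simp [Representation.asAlgebraHom_single, TensorProduct.smul_tmul']

lemma pmap_comm_g (φ : Module.Dual ℂ V₂) (g : G) (z : V₁ ⊗[ℂ] V₂) :
    pmap φ (TensorProduct.map (f g).toLinearMap LinearMap.id z)
      = (f g).toLinearMap (pmap φ z) := by
  induction z using TensorProduct.induction_on with
  | zero => simp
  | tmul x y => simp
  | add u v hu hv => simp [map_add, hu, hv]

lemma pmap_comm (φ : Module.Dual ℂ V₂) (a : MonoidAlgebra ℂ G) (z : V₁ ⊗[ℂ] V₂) :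
    pmap φ ((repT (V₂ := V₂) f).asAlgebraHom a z)
      = (toRep f).asAlgebraHom a (pmap φ z) := by
  induction a using MonoidAlgebra.induction_linear with
  | zero => simp
  | add p q hp hq => simp [map_add, hp, hq]
  | single g c =>
    simp only [Representation.asAlgebraHom_single, LinearMap.smul_apply, map_smul,
      repT_apply, toRep_apply]
    rw [pmap_comm_g]

section Inst

variable [Module (MonoidAlgebra ℂ G) V₁]
  (hs : ∀ (a : MonoidAlgebra ℂ G) (v : V₁), a • v = (toRep f).asAlgebraHom a v)

include hs

lemma smul_algebraMap' (c : ℂ) (v : V₁) :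
    (algebraMap ℂ (MonoidAlgebra ℂ G) c) • v = c • v := by
  rw [hs, AlgHom.commutes]
  simp [Module.algebraMap_end_apply]

lemma simple_of_irred (hnt : Nontrivial V₁)
    (hirr : ∀ p : Submodule ℂ V₁, (∀ g : G, ∀ x ∈ p, f g x ∈ p) → p = ⊥ ∨ p = ⊤) :
    IsSimpleModule (MonoidAlgebra ℂ G) V₁ := by
  have hbt : (⊥ : Submodule (MonoidAlgebra ℂ G) V₁) ≠ ⊤ := by
    obtain ⟨v, hv⟩ := exists_ne (0 : V₁)
    intro h
    have : v ∈ (⊥ : Submodule (MonoidAlgebra ℂ G) V₁) := h.symm ▸ Submodule.mem_top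
    exact hv ((Submodule.mem_bot _).mp this)
  refine { exists_pair_ne := ⟨⊥, ⊤, hbt⟩, eq_bot_or_eq_top := ?_ }
  intro q
  let p : Submodule ℂ V₁ :=
    { carrier := q
      add_mem' := fun ha hb => q.add_mem ha hb
      zero_mem' := q.zero_mem
      smul_mem' := fun c v hv => by
        have h1 := smul_algebraMap' f hs c v
        simp only [Set.mem_setOf_eq, SetLike.mem_coe] at hv ⊢
        rw [← h1]; exact q.smul_mem _ hv }
  have hpinv : ∀ g : G, ∀ x ∈ p, f g x ∈ p := by
    intro g x hx
    have h2 : f g x = (MonoidAlgebra.single g (1 : ℂ)) • x := by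
      rw [hs, Representation.asAlgebraHom_single]
      simp
    show f g x ∈ q
    rw [h2]
    exact q.smul_mem _ hx
  rcases hirr p hpinv with h | h
  · left
    ext x
    simp only [Submodule.mem_bot]
    constructor
    · intro hx
      have : x ∈ p := hx
      rw [h] at this
      simpa using this
    · rintro rfl; exact q.zero_mem
  · right
    ext x
    simp only [Submodule.mem_top, iff_true]
    have : x ∈ p := by rw [h]; trivial
    exact this

lemma endo_scalar [FiniteDimensional ℂ V₁] [IsSimpleModule (MonoidAlgebra ℂ G) V₁]
    (ψ : V₁ →ₗ[MonoidAlgebra ℂ G] V₁) : ∃ c : ℂ, ∀ v, ψ v = c • v := by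
  have hnt : Nontrivial V₁ := IsSimpleModule.nontrivial (MonoidAlgebra ℂ G) V₁
  have hsmulc : ∀ (c : ℂ) (v : V₁), ψ (c • v) = c • ψ v := by
    intro c v
    rw [← smul_algebraMap' f hs c v, ψ.map_smul, smul_algebraMap' f hs]
  let ψ' : Module.End ℂ V₁ :=
    { toFun := ψ
      map_add' := fun a b => ψ.map_add a b
      map_smul' := fun c v => hsmulc c v }
  obtain ⟨μ, hμ⟩ := Module.End.exists_eigenvalue ψ'
  obtain ⟨v, hv⟩ := hμ.exists_hasEigenvector
  have hψv : ψ v = μ • v := hv.apply_eq_smul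
  let χ : V₁ →ₗ[MonoidAlgebra ℂ G] V₁ :=
    { toFun := fun w => ψ w - μ • w
      map_add' := fun w₁ w₂ => by
        simp only [map_add, smul_add]; abel
      map_smul' := fun a w => by
        simp only [RingHom.id_apply]
        rw [ψ.map_smul, hs a (ψ w), hs a w, hs a (ψ w - μ • w), map_sub, map_smul] }
  have hker : LinearMap.ker χ ≠ ⊥ := by
    intro h
    have hkv : v ∈ LinearMap.ker χ := by
      simp only [LinearMap.mem_ker]
      show ψ v - μ • v = 0
      rw [hψv, sub_self]
    rw [h] at hkv
    exact hv.2 (by simpa using hkv)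
  rcases eq_bot_or_eq_top (LinearMap.ker χ) with h | h
  · exact absurd h hker
  · refine ⟨μ, fun w => ?_⟩
    have hw : w ∈ LinearMap.ker χ := h ▸ Submodule.mem_top
    have hw2 : ψ w - μ • w = 0 := LinearMap.mem_ker.mp hw
    exact sub_eq_zero.mp hw2

variable [Module (MonoidAlgebra ℂ G) (V₁ ⊗[ℂ] V₂)]
  (hsT : ∀ (a : MonoidAlgebra ℂ G) (z : V₁ ⊗[ℂ] V₂),
    a • z = (repT (V₂ := V₂) f).asAlgebraHom a z)

include hsT

/-- `v ↦ v ⊗ y` as an `A`-linear map. -/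
noncomputable def ryA (y : V₂) : V₁ →ₗ[MonoidAlgebra ℂ G] (V₁ ⊗[ℂ] V₂) where
  toFun v := v ⊗ₜ[ℂ] y
  map_add' v w := TensorProduct.add_tmul v w y
  map_smul' a v := by
    simp only [RingHom.id_apply]
    rw [hs, hsT, sigma_tmul]

/-- `pmap φ` as an `A`-linear map. -/
noncomputable def pmapA (φ : Module.Dual ℂ V₂) :
    (V₁ ⊗[ℂ] V₂) →ₗ[MonoidAlgebra ℂ G] V₁ where
  toFun := pmap φ
  map_add' a b := map_add _ a b
  map_smul' a z := by
    simp only [RingHom.id_apply]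
    rw [hs, hsT, pmap_comm]

theorem key_lemma [FiniteDimensional ℂ V₁] [FiniteDimensional ℂ V₂]
    (hnt : Nontrivial V₁)
    (hirr : ∀ p : Submodule ℂ V₁, (∀ g : G, ∀ x ∈ p, f g x ∈ p) → p = ⊥ ∨ p = ⊤)
    (W : Submodule ℂ (V₁ ⊗[ℂ] V₂))
    (hW : ∀ g : G, ∀ z ∈ W, TensorProduct.map (f g).toLinearMap LinearMap.id z ∈ W) :
    W ≤ LinearMap.range
      (TensorProduct.map (LinearMap.id : V₁ →ₗ[ℂ] V₁) (uW W).subtype) := by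
  haveI hsimp : IsSimpleModule (MonoidAlgebra ℂ G) V₁ := simple_of_irred f hs hnt hirr
  set U := uW (M := V₁) W with hU
  set Rc : Submodule ℂ (V₁ ⊗[ℂ] V₂) :=
    LinearMap.range (TensorProduct.map (LinearMap.id : V₁ →ₗ[ℂ] V₁) U.subtype) with hRc
  -- `W` as an `A`-submodule
  let WA : Submodule (MonoidAlgebra ℂ G) (V₁ ⊗[ℂ] V₂) :=
    { carrier := W
      add_mem' := fun ha hb => W.add_mem ha hb
      zero_mem' := W.zero_mem
      smul_mem' := by
        intro a z hz
        simp only [SetLike.mem_coe] at hz ⊢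
        rw [hsT]
        induction a using MonoidAlgebra.induction_linear with
        | zero => simpa using W.zero_mem
        | add p q hp hq =>
          rw [map_add, LinearMap.add_apply]
          exact W.add_mem hp hq
        | single g c =>
          rw [Representation.asAlgebraHom_single, LinearMap.smul_apply]
          exact W.smul_mem c (hW g z hz) }
  -- the target as an `A`-submodule
  have hRcinv : ∀ g : G, ∀ z ∈ Rc,
      TensorProduct.map (f g).toLinearMap LinearMap.id z ∈ Rc := by
    rintro g z ⟨t, rfl⟩
    refine ⟨TensorProduct.map (f g).toLinearMap LinearMap.id t, ?_⟩
    rw [← LinearMap.comp_apply, ← TensorProduct.map_comp, ← LinearMap.comp_apply,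
      ← TensorProduct.map_comp]
    simp
  let RA : Submodule (MonoidAlgebra ℂ G) (V₁ ⊗[ℂ] V₂) :=
    { carrier := Rc
      add_mem' := fun ha hb => Rc.add_mem ha hb
      zero_mem' := Rc.zero_mem
      smul_mem' := by
        intro a z hz
        simp only [SetLike.mem_coe] at hz ⊢
        rw [hsT]
        induction a using MonoidAlgebra.induction_linear with
        | zero => simpa using Rc.zero_mem
        | add p q hp hq =>
          rw [map_add, LinearMap.add_apply]
          exact Rc.add_mem hp hq
        | single g c =>
          rw [Representation.asAlgebraHom_single, LinearMap.smul_apply]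
          exact Rc.smul_mem c (hRcinv g z hz) }
  -- semisimplicity of `V₁ ⊗ V₂` as an `A`-module
  haveI hss : IsSemisimpleModule (MonoidAlgebra ℂ G) (V₁ ⊗[ℂ] V₂) := by
    apply IsSemisimpleModule.of_sSup_simples_eq_top
    rw [eq_top_iff]
    rintro z -
    induction z using TensorProduct.induction_on with
    | zero => exact zero_mem _
    | tmul x y =>
      rcases eq_or_ne y 0 with rfl | hy
      · rw [TensorProduct.tmul_zero]; exact zero_mem _
      · have hinj : Function.Injective (ryA f hs hsT y) := by
          intro v w hvw
          by_contra hne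
          have hsub : (v - w) ⊗ₜ[ℂ] y = 0 := by
            rw [TensorProduct.sub_tmul]
            simpa [ryA] using congrArg (fun t => t - w ⊗ₜ[ℂ] y) hvw
          exact aux_tmul_ne_zero (sub_ne_zero.mpr hne) hy hsub
        have hsimple : IsSimpleModule (MonoidAlgebra ℂ G)
            (LinearMap.range (ryA f hs hsT y)) :=
          IsSimpleModule.congr (LinearEquiv.ofInjective (ryA f hs hsT y) hinj).symm
        have hmemset : LinearMap.range (ryA f hs hsT y) ∈
            {m : Submodule (MonoidAlgebra ℂ G) (V₁ ⊗[ℂ] V₂) |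
              IsSimpleModule (MonoidAlgebra ℂ G) m} := hsimple
        exact le_sSup hmemset ⟨x, rfl⟩
    | add u v hu hv => exact add_mem hu hv
  -- reduce to simple submodules
  have hred : WA ≤ RA := by
    conv_lhs => rw [← IsSemisimpleModule.sSup_simples_le WA]
    apply sSup_le
    rintro S ⟨hS, hSW⟩
    haveI := hS
    haveI : Nontrivial S := IsSimpleModule.nontrivial (MonoidAlgebra ℂ G) S
    obtain ⟨s₀, hs₀⟩ := exists_ne (0 : S)
    have hsne : (s₀ : V₁ ⊗[ℂ] V₂) ≠ 0 := fun h => hs₀ (Subtype.ext h)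
    let b : Module.Basis (Fin (Module.finrank ℂ V₂)) ℂ V₂ := Module.finBasis ℂ V₂
    have hex : ∃ j, pmap (b.coord j) (s₀ : V₁ ⊗[ℂ] V₂) ≠ 0 := by
      by_contra h
      push_neg at h
      apply hsne
      rw [expand_basis b (s₀ : V₁ ⊗[ℂ] V₂)]
      simp [h]
    obtain ⟨j, hj⟩ := hex
    let θ : S →ₗ[MonoidAlgebra ℂ G] V₁ := (pmapA f hs hsT (b.coord j)).comp S.subtype
    have hθ : θ ≠ 0 := by
      intro h
      apply hj
      have h1 : θ s₀ = 0 := by rw [h]; rfl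
      simpa [θ, pmapA] using h1
    have hbij := LinearMap.bijective_of_ne_zero hθ
    let e := LinearEquiv.ofBijective θ hbij
    have hcoef : ∀ k, ∃ c : ℂ, ∀ v : V₁,
        pmap (b.coord k) ((e.symm v : S) : V₁ ⊗[ℂ] V₂) = c • v := by
      intro k
      obtain ⟨c, hc⟩ := endo_scalar f hs
        ((pmapA f hs hsT (b.coord k)).comp (S.subtype.comp (e.symm : V₁ ≃ₗ[MonoidAlgebra ℂ G] S).toLinearMap))
      exact ⟨c, fun v => hc v⟩
    choose c hc using hcoef
    set y₀ : V₂ := ∑ k, c k • b k with hy₀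
    have hrep : ∀ v : V₁, ((e.symm v : S) : V₁ ⊗[ℂ] V₂) = v ⊗ₜ[ℂ] y₀ := by
      intro v
      conv_lhs => rw [expand_basis b ((e.symm v : S) : V₁ ⊗[ℂ] V₂)]
      rw [hy₀, TensorProduct.tmul_sum]
      refine Finset.sum_congr rfl fun k _ => ?_
      rw [hc k v, TensorProduct.tmul_smul, TensorProduct.smul_tmul']
    have hy₀U0 : ∀ x : V₁, x ⊗ₜ[ℂ] y₀ ∈ W := by
      intro x
      have hxw : ((e.symm x : S) : V₁ ⊗[ℂ] V₂) ∈ W := hSW (e.symm x).2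
      rw [hrep x] at hxw
      exact hxw
    have hy₀U : y₀ ∈ U := hy₀U0
    intro t ht
    have h2 : t = (e ⟨t, ht⟩) ⊗ₜ[ℂ] y₀ := by
      have h3 := hrep (e ⟨t, ht⟩)
      rw [e.symm_apply_apply] at h3
      exact h3
    show t ∈ Rc
    rw [h2]
    exact ⟨(e ⟨t, ht⟩) ⊗ₜ[ℂ] (⟨y₀, hy₀U⟩ : U), by simp⟩
  intro w hw
  exact hred (show w ∈ WA from hw)

end Inst

end Hard

/-- The tensor product representation of `G₁ × G₂` on `V₁ ⊗ V₂` is irreducible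
iff both factors are irreducible. -/
theorem stmt_10 {G₁ G₂ V₁ V₂ : Type*} [Group G₁] [Group G₂]
    [AddCommGroup V₁] [Module ℂ V₁] [AddCommGroup V₂] [Module ℂ V₂]
    [FiniteDimensional ℂ V₁] [FiniteDimensional ℂ V₂]
    (f₁ : G₁ →* (V₁ ≃ₗ[ℂ] V₁)) (f₂ : G₂ →* (V₂ ≃ₗ[ℂ] V₂)) :
    (Nontrivial (V₁ ⊗[ℂ] V₂) ∧
      ∀ p : Submodule ℂ (V₁ ⊗[ℂ] V₂),
        (∀ (g₁ : G₁) (g₂ : G₂), ∀ x ∈ p,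
          TensorProduct.map (f₁ g₁).toLinearMap (f₂ g₂).toLinearMap x ∈ p) →
        p = ⊥ ∨ p = ⊤)
    ↔ ((Nontrivial V₁ ∧
          ∀ p : Submodule ℂ V₁, (∀ (g : G₁), ∀ x ∈ p, f₁ g x ∈ p) → p = ⊥ ∨ p = ⊤) ∧
       (Nontrivial V₂ ∧
          ∀ p : Submodule ℂ V₂, (∀ (g : G₂), ∀ x ∈ p, f₂ g x ∈ p) → p = ⊥ ∨ p = ⊤)) := by
  constructor
  · rintro ⟨hnt, hT⟩
    have hnt1 : Nontrivial V₁ := by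
      rcases subsingleton_or_nontrivial V₁ with h | h
      · exact absurd hnt (not_nontrivial _)
      · exact h
    have hnt2 : Nontrivial V₂ := by
      rcases subsingleton_or_nontrivial V₂ with h | h
      · exact absurd hnt (not_nontrivial _)
      · exact h
    refine ⟨⟨hnt1, ?_⟩, ⟨hnt2, ?_⟩⟩
    · intro p hp
      set q : Submodule ℂ (V₁ ⊗[ℂ] V₂) :=
        LinearMap.range (TensorProduct.map p.subtype (LinearMap.id : V₂ →ₗ[ℂ] V₂)) with hq
      have hqinv : ∀ (g₁ : G₁) (g₂ : G₂), ∀ z ∈ q,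
          TensorProduct.map (f₁ g₁).toLinearMap (f₂ g₂).toLinearMap z ∈ q := by
        rintro g₁ g₂ z ⟨t, rfl⟩
        refine ⟨TensorProduct.map ((f₁ g₁).toLinearMap.restrict (fun x hx => hp g₁ x hx))
          (f₂ g₂).toLinearMap t, ?_⟩
        have e1 : p.subtype ∘ₗ ((f₁ g₁).toLinearMap.restrict (fun x hx => hp g₁ x hx))
            = (f₁ g₁).toLinearMap ∘ₗ p.subtype := by
          ext x; simp [LinearMap.restrict_apply]
        have e2 : (LinearMap.id : V₂ →ₗ[ℂ] V₂) ∘ₗ (f₂ g₂).toLinearMap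
            = (f₂ g₂).toLinearMap ∘ₗ LinearMap.id := by
          ext y; simp
        rw [← LinearMap.comp_apply, ← TensorProduct.map_comp, e1, e2,
          TensorProduct.map_comp, LinearMap.comp_apply]
      rcases hT q hqinv with h | h
      · left
        rw [eq_bot_iff]
        intro x hx
        simp only [Submodule.mem_bot]
        by_contra hx0
        obtain ⟨y, hy⟩ := exists_ne (0 : V₂)
        have hmem : x ⊗ₜ[ℂ] y ∈ q := ⟨(⟨x, hx⟩ : p) ⊗ₜ[ℂ] y, by simp⟩
        rw [h] at hmem
        exact aux_tmul_ne_zero hx0 hy ((Submodule.mem_bot _).mp hmem)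
      · right
        by_contra hpt
        obtain ⟨x, hx⟩ : ∃ x, x ∉ p := by
          by_contra hall
          push_neg at hall
          exact hpt (eq_top_iff.mpr fun z _ => hall z)
        obtain ⟨y, hy⟩ := exists_ne (0 : V₂)
        have h0 : ∀ z ∈ q, TensorProduct.map p.mkQ (LinearMap.id : V₂ →ₗ[ℂ] V₂) z = 0 := by
          rintro z ⟨t, rfl⟩
          rw [← LinearMap.comp_apply, ← TensorProduct.map_comp]
          have : p.mkQ.comp p.subtype = 0 := by ext u; simp
          rw [this]
          induction t using TensorProduct.induction_on with
          | zero => simp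
          | tmul a bb => simp
          | add u v hu hv =>
            rw [map_add, hu, hv, add_zero]
        have hmem : x ⊗ₜ[ℂ] y ∈ q := h ▸ Submodule.mem_top
        have := h0 _ hmem
        simp only [TensorProduct.map_tmul, LinearMap.id_coe, id_eq] at this
        refine aux_tmul_ne_zero (x := p.mkQ x) (y := y) ?_ hy this
        simpa [Submodule.Quotient.mk_eq_zero] using hx
    · intro p hp
      set q : Submodule ℂ (V₁ ⊗[ℂ] V₂) :=
        LinearMap.range (TensorProduct.map (LinearMap.id : V₁ →ₗ[ℂ] V₁) p.subtype) with hq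
      have hqinv : ∀ (g₁ : G₁) (g₂ : G₂), ∀ z ∈ q,
          TensorProduct.map (f₁ g₁).toLinearMap (f₂ g₂).toLinearMap z ∈ q := by
        rintro g₁ g₂ z ⟨t, rfl⟩
        refine ⟨TensorProduct.map (f₁ g₁).toLinearMap
          ((f₂ g₂).toLinearMap.restrict (fun y hy => hp g₂ y hy)) t, ?_⟩
        have e1 : (LinearMap.id : V₁ →ₗ[ℂ] V₁) ∘ₗ (f₁ g₁).toLinearMap
            = (f₁ g₁).toLinearMap ∘ₗ LinearMap.id := by
          ext x; simp
        have e2 : p.subtype ∘ₗ ((f₂ g₂).toLinearMap.restrict (fun y hy => hp g₂ y hy))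
            = (f₂ g₂).toLinearMap ∘ₗ p.subtype := by
          ext y; simp [LinearMap.restrict_apply]
        rw [← LinearMap.comp_apply, ← TensorProduct.map_comp, e1, e2,
          TensorProduct.map_comp, LinearMap.comp_apply]
      rcases hT q hqinv with h | h
      · left
        rw [eq_bot_iff]
        intro y hy
        simp only [Submodule.mem_bot]
        by_contra hy0
        obtain ⟨x, hx⟩ := exists_ne (0 : V₁)
        have hmem : x ⊗ₜ[ℂ] y ∈ q := ⟨x ⊗ₜ[ℂ] (⟨y, hy⟩ : p), by simp⟩
        rw [h] at hmem
        exact aux_tmul_ne_zero hx hy0 ((Submodule.mem_bot _).mp hmem)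
      · right
        by_contra hpt
        obtain ⟨y, hy⟩ : ∃ y, y ∉ p := by
          by_contra hall
          push_neg at hall
          exact hpt (eq_top_iff.mpr fun z _ => hall z)
        obtain ⟨x, hx⟩ := exists_ne (0 : V₁)
        have h0 : ∀ z ∈ q, TensorProduct.map (LinearMap.id : V₁ →ₗ[ℂ] V₁) p.mkQ z = 0 := by
          rintro z ⟨t, rfl⟩
          rw [← LinearMap.comp_apply, ← TensorProduct.map_comp]
          have : p.mkQ.comp p.subtype = 0 := by ext u; simp
          rw [this]
          induction t using TensorProduct.induction_on with
          | zero => simp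
          | tmul a bb => simp
          | add u v hu hv =>
            rw [map_add, hu, hv, add_zero]
        have hmem : x ⊗ₜ[ℂ] y ∈ q := h ▸ Submodule.mem_top
        have := h0 _ hmem
        simp only [TensorProduct.map_tmul, LinearMap.id_coe, id_eq] at this
        refine aux_tmul_ne_zero (x := x) (y := p.mkQ y) hx ?_ this
        simpa [Submodule.Quotient.mk_eq_zero] using hy
  · rintro ⟨⟨hnt1, hirr1⟩, ⟨hnt2, hirr2⟩⟩
    constructor
    · obtain ⟨x, hx⟩ := exists_ne (0 : V₁)
      obtain ⟨y, hy⟩ := exists_ne (0 : V₂)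
      exact ⟨x ⊗ₜ[ℂ] y, 0, aux_tmul_ne_zero hx hy⟩
    · intro W hWinv
      have hW1 : ∀ g : G₁, ∀ z ∈ W,
          TensorProduct.map (f₁ g).toLinearMap LinearMap.id z ∈ W := by
        intro g z hz
        have := hWinv g 1 z hz
        simpa using this
      letI : Module (MonoidAlgebra ℂ G₁) V₁ :=
        Module.compHom V₁ ((toRep f₁).asAlgebraHom).toRingHom
      letI : Module (MonoidAlgebra ℂ G₁) (V₁ ⊗[ℂ] V₂) :=
        Module.compHom (V₁ ⊗[ℂ] V₂) ((repT (V₂ := V₂) f₁).asAlgebraHom).toRingHom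
      have hkey := key_lemma f₁ (fun a v => Module.End.smul_def _ v)
        (fun a z => Module.End.smul_def _ z) hnt1 hirr1 W hW1
      have hle : LinearMap.range
          (TensorProduct.map (LinearMap.id : V₁ →ₗ[ℂ] V₁) (uW W).subtype) ≤ W :=
        range_map_le_W W
      have hWeq : W = LinearMap.range
          (TensorProduct.map (LinearMap.id : V₁ →ₗ[ℂ] V₁) (uW W).subtype) :=
        le_antisymm hkey hle
      have hUinv : ∀ g : G₂, ∀ y ∈ uW W, f₂ g y ∈ uW W := by
        intro g y hy
        rw [mem_uW]
        intro x
        have := hWinv 1 g (x ⊗ₜ[ℂ] y) (hy x)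
        simpa using this
      rcases hirr2 (uW W) hUinv with h | h
      · left
        rw [hWeq, eq_bot_iff]
        rintro z ⟨t, rfl⟩
        simp only [Submodule.mem_bot]
        induction t using TensorProduct.induction_on with
        | zero => simp
        | tmul x u =>
          have hu : (u : V₂) = 0 := by simpa using h.le u.2
          simp [hu]
        | add u v hu hv => rw [map_add, hu, hv, add_zero]
      · right
        rw [hWeq]
        rw [LinearMap.range_eq_top]
        apply TensorProduct.map_surjective
        · exact Function.surjective_id
        · intro v
          exact ⟨⟨v, h ▸ Submodule.mem_top⟩, rfl⟩
end
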